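/- Let L be a real symmetric positive semidefinite d×d matrix admitting an orthonormal eigenbasis e_1,…,e_d of ℝ^d with nonnegative eigenvalues λ_1,…,λ_d (L e_i = λ_i e_i). Fix σ ≥ 0, let A = I + σL, fix a vector v ∈ ℝ^d and ν ≥ 0, and let n be a random vector in ℝ^d whose coordinates are i.i.d. centered Gaussian with variance ν² (i.e., distributed according to the d-fold product of the Gaussian measure N(0, ν²)). Then the Laplacian smoothing estimate v̂ = A⁻¹(v + n) satisfies E‖v̂ − v‖² = Σ_{i=1}^d (σ²λ_i²/(1+σλ_i)²)·⟨v, e_i⟩² + Σ_{i=1}^d ν²/(1+σλ_i)². -/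

import Mathlib

open MeasureTheory ProbabilityTheory
open scoped NNReal
open Real
open scoped ENNReal

lemma gauss_rep (V : ℝ≥0) (hV : V ≠ 0) :
    gaussianReal 0 V = volume.withDensity (fun x => ((gaussianPDFReal 0 V x).toNNReal : ℝ≥0∞)) := by
  rw [gaussianReal_of_var_ne_zero 0 hV]
  rfl

lemma pdf_eq (V : ℝ≥0) (x : ℝ) :
    gaussianPDFReal 0 V x = (Real.sqrt (2 * π * V))⁻¹ * Real.exp (-(2 * (V:ℝ))⁻¹ * x ^ 2) := by
  rw [gaussianPDFReal]
  ring_nf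

lemma gauss_integrable_poly (V : ℝ≥0) {g : ℝ → ℝ}
    (hint : V ≠ 0 → Integrable (fun x => g x * Real.exp (-(2 * (V:ℝ))⁻¹ * x ^ 2)) volume) :
    Integrable g (gaussianReal 0 V) := by
  rcases eq_or_ne V 0 with rfl | hV
  · rw [gaussianReal_zero_var]
    exact (integrable_const (g 0)).congr (MeasureTheory.ae_eq_dirac g).symm
  · rw [gauss_rep V hV, integrable_withDensity_iff_integrable_smul
      (measurable_gaussianPDFReal 0 V).real_toNNReal]
    have : (fun x => (gaussianPDFReal 0 V x).toNNReal • g x)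
        = fun x => (Real.sqrt (2 * π * V))⁻¹ * (g x * Real.exp (-(2 * (V:ℝ))⁻¹ * x ^ 2)) := by
      funext x
      rw [NNReal.smul_def, smul_eq_mul, Real.coe_toNNReal _ (gaussianPDFReal_nonneg 0 V x), pdf_eq]
      ring
    rw [this]
    exact (hint hV).const_mul _

lemma gauss_integral_poly (V : ℝ≥0) (hV : V ≠ 0) (g : ℝ → ℝ) :
    ∫ x, g x ∂(gaussianReal 0 V)
      = (Real.sqrt (2 * π * V))⁻¹ * ∫ x, g x * Real.exp (-(2 * (V:ℝ))⁻¹ * x ^ 2) := by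
  rw [gauss_rep V hV,
    integral_withDensity_eq_integral_smul (measurable_gaussianPDFReal 0 V).real_toNNReal]
  rw [← integral_const_mul]
  congr 1
  funext x
  rw [NNReal.smul_def, smul_eq_mul, Real.coe_toNNReal _ (gaussianPDFReal_nonneg 0 V x), pdf_eq]
  ring

lemma lebesgue_first_moment (b : ℝ) : ∫ x : ℝ, x * Real.exp (-b * x ^ 2) = 0 := by
  have h := integral_neg_eq_self (fun x : ℝ => x * Real.exp (-b * x ^ 2)) volume
  simp only [neg_sq, neg_mul, integral_neg] at h
  simp only [neg_mul]
  linarith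

lemma lebesgue_second_moment {b : ℝ} (hb : 0 < b) :
    ∫ x : ℝ, x ^ 2 * Real.exp (-b * x ^ 2) = b ^ (-(3:ℝ)/2) * (Real.sqrt π / 2) := by
  have habs : ∀ x : ℝ, |x| ^ 2 * Real.exp (-b * |x| ^ 2) = x ^ 2 * Real.exp (-b * x ^ 2) := by
    intro x; rw [sq_abs]
  have h2 : ∫ x : ℝ, x ^ 2 * Real.exp (-b * x ^ 2)
      = 2 * ∫ x in Set.Ioi (0:ℝ), x ^ 2 * Real.exp (-b * x ^ 2) := by
    rw [← integral_comp_abs (f := fun x => x ^ 2 * Real.exp (-b * x ^ 2))]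
    simp_rw [habs]
  have h3 := integral_rpow_mul_exp_neg_mul_rpow (p := 2) (q := 2) (b := b)
    (by norm_num) (by norm_num) hb
  simp only [Real.rpow_two] at h3
  have hGamma : Real.Gamma ((2+1:ℝ)/2) = Real.sqrt π / 2 := by
    have h32 : ((2+1:ℝ)/2) = 1/2 + 1 := by norm_num
    rw [h32, Real.Gamma_add_one (by norm_num), Real.Gamma_one_half_eq]
    ring
  rw [h2, h3, hGamma]
  rw [show (-(2+1:ℝ)/2) = -(3:ℝ)/2 by norm_num]
  ring

lemma gauss_integral_id (V : ℝ≥0) : ∫ x, x ∂(gaussianReal 0 V) = 0 := by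
  rcases eq_or_ne V 0 with rfl | hV
  · rw [gaussianReal_zero_var, integral_dirac]
  · rw [gauss_integral_poly V hV, lebesgue_first_moment, mul_zero]

lemma gauss_integral_sq (V : ℝ≥0) : ∫ x, x ^ 2 ∂(gaussianReal 0 V) = V := by
  rcases eq_or_ne V 0 with rfl | hV
  · rw [gaussianReal_zero_var, integral_dirac]; norm_num
  · have hVpos : (0:ℝ) < V := lt_of_le_of_ne V.coe_nonneg (by exact_mod_cast hV.symm)
    have h2V : (0:ℝ) < 2 * V := by positivity
    have hb : (0:ℝ) < (2 * (V:ℝ))⁻¹ := by positivity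
    rw [gauss_integral_poly V hV, lebesgue_second_moment hb]
    rw [show (-(3:ℝ)/2) = -((3:ℝ)/2) by ring, Real.inv_rpow h2V.le, Real.rpow_neg h2V.le, inv_inv]
    rw [show ((3:ℝ)/2) = 1 + (1/2:ℝ) by norm_num, Real.rpow_add h2V, Real.rpow_one,
      ← Real.sqrt_eq_rpow]
    rw [show (2 * π * (V:ℝ)) = (2 * V) * π by ring, Real.sqrt_mul h2V.le]
    have hπ : Real.sqrt π ≠ 0 := by positivity
    have h2V' : Real.sqrt (2 * V) ≠ 0 := by positivity
    field_simp

lemma gauss_var_pos (V : ℝ≥0) (hV : V ≠ 0) : (0:ℝ) < (2 * (V:ℝ))⁻¹ := by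
  have hVpos : (0:ℝ) < V := lt_of_le_of_ne V.coe_nonneg (by exact_mod_cast hV.symm)
  positivity

lemma gauss_integrable_id (V : ℝ≥0) : Integrable (fun x : ℝ => x) (gaussianReal 0 V) := by
  refine gauss_integrable_poly V (fun hV => ?_)
  exact integrable_mul_exp_neg_mul_sq (gauss_var_pos V hV)

lemma gauss_integrable_sq (V : ℝ≥0) : Integrable (fun x : ℝ => x ^ 2) (gaussianReal 0 V) := by
  refine gauss_integrable_poly V (fun hV => ?_)
  have h := integrable_rpow_mul_exp_neg_mul_sq (gauss_var_pos V hV) (s := 2) (by norm_num)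
  simpa only [Real.rpow_two] using h

section Pi

variable {d : ℕ} (V : ℝ≥0)

lemma pi_integrable_single (j : Fin d) :
    Integrable (fun n : Fin d → ℝ => n j) (Measure.pi (fun _ : Fin d => gaussianReal 0 V)) := by
  letI : MeasureSpace ℝ := ⟨gaussianReal 0 V⟩
  haveI : SigmaFinite (volume : Measure ℝ) := inferInstanceAs (SigmaFinite (gaussianReal 0 V))
  have key : Integrable (fun n : Fin d → ℝ =>
      ∏ i, (fun (i : Fin d) (x : ℝ) => if i = j then x else 1) i (n i)) volume := by
    apply Integrable.fintype_prod (f := fun (i : Fin d) (x : ℝ) => if i = j then x else 1)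
    intro i
    by_cases h : i = j
    · simp only [h, if_true, eq_self_iff_true]
      exact gauss_integrable_id V
    · haveI : IsProbabilityMeasure (volume : Measure ℝ) :=
        inferInstanceAs (IsProbabilityMeasure (gaussianReal 0 V))
      simp only [h, if_false]
      exact integrable_const 1
  have heq : (fun n : Fin d → ℝ => n j) = fun n : Fin d → ℝ =>
      ∏ i, (fun (i : Fin d) (x : ℝ) => if i = j then x else 1) i (n i) := by
    funext n
    simp [Finset.prod_ite_eq']
  rw [heq]
  exact key

lemma pi_integral_single (j : Fin d) :
    ∫ n : Fin d → ℝ, n j ∂(Measure.pi (fun _ : Fin d => gaussianReal 0 V)) = 0 := by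
  letI : MeasureSpace ℝ := ⟨gaussianReal 0 V⟩
  haveI : SigmaFinite (volume : Measure ℝ) := inferInstanceAs (SigmaFinite (gaussianReal 0 V))
  have heq : (fun n : Fin d → ℝ => n j) = fun n : Fin d → ℝ =>
      ∏ i, (fun (i : Fin d) (x : ℝ) => if i = j then x else 1) i (n i) := by
    funext n
    simp [Finset.prod_ite_eq']
  rw [heq]
  show (∫ n : Fin d → ℝ, ∏ i, (fun (i : Fin d) (x : ℝ) => if i = j then x else 1) i (n i)) = 0
  erw [MeasureTheory.integral_fintype_prod_eq_prod (μ := fun _ => (volume : Measure ℝ))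
    (f := fun (i : Fin d) (x : ℝ) => if i = j then x else 1)]
  apply Finset.prod_eq_zero (Finset.mem_univ j)
  simp only [if_true, eq_self_iff_true]
  exact gauss_integral_id V

lemma pi_integrable_pair (j j' : Fin d) :
    Integrable (fun n : Fin d → ℝ => n j * n j')
      (Measure.pi (fun _ : Fin d => gaussianReal 0 V)) := by
  letI : MeasureSpace ℝ := ⟨gaussianReal 0 V⟩
  haveI : SigmaFinite (volume : Measure ℝ) := inferInstanceAs (SigmaFinite (gaussianReal 0 V))
  haveI : IsProbabilityMeasure (volume : Measure ℝ) :=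
    inferInstanceAs (IsProbabilityMeasure (gaussianReal 0 V))
  have key : Integrable (fun n : Fin d → ℝ =>
      ∏ i, (fun (i : Fin d) (x : ℝ) =>
        (if i = j then x else 1) * (if i = j' then x else 1)) i (n i)) volume := by
    apply Integrable.fintype_prod
      (f := fun (i : Fin d) (x : ℝ) => (if i = j then x else 1) * (if i = j' then x else 1))
    intro i
    by_cases h : i = j
    · subst h
      by_cases h' : i = j'
      · subst h'
        have hfun : (fun x : ℝ => (if i = i then x else 1) * (if i = i then x else 1))
            = fun x : ℝ => x ^ 2 := by funext x; simp [sq]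
        rw [hfun]
        exact gauss_integrable_sq V
      · simp only [if_pos rfl, if_neg h', mul_one]
        exact gauss_integrable_id V
    · by_cases h' : i = j'
      · subst h'
        simp only [if_neg h, if_pos rfl, one_mul]
        exact gauss_integrable_id V
      · simp only [if_neg h, if_neg h', mul_one]
        exact integrable_const 1
  have heq : (fun n : Fin d → ℝ => n j * n j') = fun n : Fin d → ℝ =>
      ∏ i, (fun (i : Fin d) (x : ℝ) =>
        (if i = j then x else 1) * (if i = j' then x else 1)) i (n i) := by
    funext n
    rw [Finset.prod_mul_distrib]
    simp [Finset.prod_ite_eq']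
  rw [heq]
  exact key

lemma pi_integral_pair (j j' : Fin d) :
    ∫ n : Fin d → ℝ, n j * n j' ∂(Measure.pi (fun _ : Fin d => gaussianReal 0 V))
      = if j = j' then (V:ℝ) else 0 := by
  letI : MeasureSpace ℝ := ⟨gaussianReal 0 V⟩
  haveI : SigmaFinite (volume : Measure ℝ) := inferInstanceAs (SigmaFinite (gaussianReal 0 V))
  haveI : IsProbabilityMeasure (volume : Measure ℝ) :=
    inferInstanceAs (IsProbabilityMeasure (gaussianReal 0 V))
  have heq : (fun n : Fin d → ℝ => n j * n j') = fun n : Fin d → ℝ =>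
      ∏ i, (fun (i : Fin d) (x : ℝ) =>
        (if i = j then x else 1) * (if i = j' then x else 1)) i (n i) := by
    funext n
    rw [Finset.prod_mul_distrib]
    simp [Finset.prod_ite_eq']
  rw [heq]
  show (∫ n : Fin d → ℝ, ∏ i, (fun (i : Fin d) (x : ℝ) =>
      (if i = j then x else 1) * (if i = j' then x else 1)) i (n i))
    = if j = j' then (V:ℝ) else 0
  erw [MeasureTheory.integral_fintype_prod_eq_prod (μ := fun _ => (volume : Measure ℝ))
    (f := fun (i : Fin d) (x : ℝ) => (if i = j then x else 1) * (if i = j' then x else 1))]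
  by_cases h : j = j'
  · subst h
    rw [if_pos rfl]
    have hstep : ∀ i : Fin d, (∫ x : ℝ, (if i = j then x else 1) * (if i = j then x else 1))
        = if i = j then (V:ℝ) else 1 := by
      intro i
      by_cases hi : i = j
      · simp only [hi, eq_self_iff_true, if_true]
        have hfun : (fun x : ℝ => x * x) = fun x : ℝ => x ^ 2 := by funext x; ring
        rw [show (∫ x : ℝ, x * x) = ∫ x : ℝ, x ^ 2 by rw [hfun]]
        exact gauss_integral_sq V
      · simp [hi]
    rw [Finset.prod_congr rfl (fun i _ => hstep i)]
    simp [Finset.prod_ite_eq']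
  · rw [if_neg h]
    apply Finset.prod_eq_zero (Finset.mem_univ j)
    have hfun : (fun x : ℝ => (if j = j then x else 1) * (if j = j' then x else 1))
        = fun x : ℝ => x := by funext x; simp [h]
    rw [hfun]
    exact gauss_integral_id V

end Pi


/-- Bias–variance decomposition for the Laplacian smoothing estimate
`v̂ = (I + σL)⁻¹ (v + n)`, where `L` is symmetric positive semidefinite with
orthonormal eigenbasis `e` and eigenvalues `lam`, `σ ≥ 0`, and `n` has i.i.d.
centered Gaussian coordinates of variance `ν²`:
`E‖v̂ − v‖² = Σᵢ (σ²λᵢ²/(1+σλᵢ)²)⟨v,eᵢ⟩² + Σᵢ ν²/(1+σλᵢ)²`. -/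
theorem laplacian_smoothing_bias_variance (d : ℕ)
    (L : Matrix (Fin d) (Fin d) ℝ) (hL : L.IsSymm)
    (e : Fin d → Fin d → ℝ) (lam : Fin d → ℝ)
    (horth : ∀ i j, ∑ k, e i k * e j k = if i = j then (1 : ℝ) else 0)
    (heig : ∀ i, L.mulVec (e i) = lam i • e i)
    (hlam : ∀ i, 0 ≤ lam i)
    (σ : ℝ) (hσ : 0 ≤ σ) (v : Fin d → ℝ) (ν : ℝ≥0) :
    (∫ n : Fin d → ℝ,
        ∑ k, ((((1 : Matrix (Fin d) (Fin d) ℝ) + σ • L)⁻¹.mulVec (v + n)) k - v k) ^ 2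
        ∂(Measure.pi fun _ : Fin d => gaussianReal 0 (ν ^ 2)))
      = (∑ i, σ ^ 2 * lam i ^ 2 / (1 + σ * lam i) ^ 2 * (∑ k, v k * e i k) ^ 2)
        + ∑ i, (ν : ℝ) ^ 2 / (1 + σ * lam i) ^ 2 := by
  classical
  have hpos : ∀ i, (0:ℝ) < 1 + σ * lam i := fun i => by nlinarith [mul_nonneg hσ (hlam i)]
  have hne : ∀ i, (1:ℝ) + σ * lam i ≠ 0 := fun i => ne_of_gt (hpos i)
  set A : Matrix (Fin d) (Fin d) ℝ := 1 + σ • L with hA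
  set D : Fin d → ℝ := fun i => (1 + σ * lam i)⁻¹ with hD
  set C : Matrix (Fin d) (Fin d) ℝ := Matrix.of fun k j => ∑ i, e i k * (D i * e i j) with hC
  -- completeness of the orthonormal basis
  have hE : ∀ k l : Fin d, (∑ i, e i k * e i l) = if k = l then (1:ℝ) else 0 := by
    set E : Matrix (Fin d) (Fin d) ℝ := Matrix.of e with hEdef
    have h1 : E * E.transpose = 1 := by
      ext i j
      simp only [Matrix.mul_apply, Matrix.transpose_apply, hEdef, Matrix.of_apply,
        Matrix.one_apply]
      exact horth i j
    have h2 : E.transpose * E = 1 := mul_eq_one_comm.mp h1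
    intro k l
    have h3 : (E.transpose * E) k l = (1 : Matrix (Fin d) (Fin d) ℝ) k l := by rw [h2]
    simpa [Matrix.mul_apply, Matrix.transpose_apply, hEdef, Matrix.one_apply] using h3
  -- eigen-relation for A
  have hAv : ∀ i k, (∑ m, A k m * e i m) = (1 + σ * lam i) * e i k := by
    intro i k
    have hAe : A.mulVec (e i) = fun m => (1 + σ * lam i) * e i m := by
      funext m
      rw [hA, Matrix.add_mulVec, Matrix.one_mulVec, Matrix.smul_mulVec, heig i]
      simp only [Pi.add_apply, Pi.smul_apply, smul_eq_mul]
      ring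
    have := congrFun hAe k
    simpa [Matrix.mulVec, dotProduct] using this
  have hAC : A * C = 1 := by
    ext k j
    rw [Matrix.mul_apply]
    simp only [hC, Matrix.of_apply]
    calc ∑ m, A k m * ∑ i, e i m * (D i * e i j)
        = ∑ m, ∑ i, A k m * (e i m * (D i * e i j)) := by simp_rw [Finset.mul_sum]
      _ = ∑ i, ∑ m, A k m * (e i m * (D i * e i j)) := Finset.sum_comm
      _ = ∑ i, (∑ m, A k m * e i m) * (D i * e i j) := by
            refine Finset.sum_congr rfl fun i _ => ?_
            rw [Finset.sum_mul]
            exact Finset.sum_congr rfl fun m _ => by ring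
      _ = ∑ i, ((1 + σ * lam i) * e i k) * (D i * e i j) := by simp_rw [hAv]
      _ = ∑ i, e i k * e i j := by
            refine Finset.sum_congr rfl fun i _ => ?_
            have : (1 + σ * lam i) * e i k * (D i * e i j)
                = ((1 + σ * lam i) * (1 + σ * lam i)⁻¹) * (e i k * e i j) := by
              rw [hD]; ring
            rw [this, mul_inv_cancel₀ (hne i), one_mul]
      _ = (1 : Matrix (Fin d) (Fin d) ℝ) k j := by
            rw [hE k j, Matrix.one_apply]
  have hCinv : A⁻¹ = C := Matrix.inv_eq_right_inv hAC
  rw [hCinv]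
  set μ := Measure.pi fun _ : Fin d => gaussianReal 0 (ν ^ 2) with hμ
  set w : Fin d → ℝ := fun k => C.mulVec v k - v k with hw
  set a : Fin d → ℝ := fun j => ∑ k, 2 * w k * C k j with ha
  set b : Fin d → Fin d → ℝ := fun j j' => ∑ k, C k j * C k j' with hb
  -- pointwise expansion of the integrand
  have hpoint : ∀ n : Fin d → ℝ, (∑ k, (C.mulVec (v + n) k - v k) ^ 2)
      = (∑ k, w k ^ 2) + ((∑ j, a j * n j) + ∑ j, ∑ j', b j j' * (n j * n j')) := by
    intro n
    have h1 : ∀ k, C.mulVec (v + n) k - v k = w k + ∑ j, C k j * n j := by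
      intro k
      rw [Matrix.mulVec_add]
      simp only [hw, Pi.add_apply, Matrix.mulVec, dotProduct]
      ring
    have h2 : ∀ k, (C.mulVec (v + n) k - v k) ^ 2
        = w k ^ 2 + ((∑ j, (2 * w k * C k j) * n j)
          + ∑ j, ∑ j', (C k j * C k j') * (n j * n j')) := by
      intro k
      have e1 : (∑ j, (2 * w k * C k j) * n j) = 2 * w k * ∑ j, C k j * n j := by
        rw [Finset.mul_sum]
        exact Finset.sum_congr rfl fun j _ => by ring
      have e2 : (∑ j, ∑ j', (C k j * C k j') * (n j * n j'))
          = (∑ j, C k j * n j) * (∑ j', C k j' * n j') := by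
        rw [Finset.sum_mul_sum]
        exact Finset.sum_congr rfl fun j _ => Finset.sum_congr rfl fun j' _ => by ring
      rw [h1 k, e1, e2]
      ring
    calc (∑ k, (C.mulVec (v + n) k - v k) ^ 2)
        = ∑ k, (w k ^ 2 + ((∑ j, (2 * w k * C k j) * n j)
            + ∑ j, ∑ j', (C k j * C k j') * (n j * n j'))) :=
          Finset.sum_congr rfl fun k _ => h2 k
      _ = (∑ k, w k ^ 2) + ((∑ k, ∑ j, (2 * w k * C k j) * n j)
            + ∑ k, ∑ j, ∑ j', (C k j * C k j') * (n j * n j')) := by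
          rw [Finset.sum_add_distrib, Finset.sum_add_distrib]
      _ = (∑ k, w k ^ 2) + ((∑ j, a j * n j) + ∑ j, ∑ j', b j j' * (n j * n j')) := by
          congr 1
          congr 1
          · rw [Finset.sum_comm]
            exact Finset.sum_congr rfl fun j _ => by rw [ha, Finset.sum_mul]
          · rw [Finset.sum_comm]
            refine Finset.sum_congr rfl fun j _ => ?_
            rw [Finset.sum_comm]
            refine Finset.sum_congr rfl fun j' _ => ?_
            rw [hb, Finset.sum_mul]
  -- integrate
  have hIG : Integrable (fun n : Fin d → ℝ => ∑ j, a j * n j) μ :=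
    integrable_finset_sum _ (fun j _ => (pi_integrable_single (ν ^ 2) j).const_mul (a j))
  have hIH : Integrable (fun n : Fin d → ℝ => ∑ j, ∑ j', b j j' * (n j * n j')) μ :=
    integrable_finset_sum _ (fun j _ => integrable_finset_sum _
      (fun j' _ => (pi_integrable_pair (ν ^ 2) j j').const_mul (b j j')))
  haveI : IsProbabilityMeasure μ := by
    rw [hμ]
    infer_instance
  have hint : (∫ n : Fin d → ℝ, ∑ k, (C.mulVec (v + n) k - v k) ^ 2 ∂μ)
      = (∑ k, w k ^ 2) + ∑ j, b j j * (ν:ℝ) ^ 2 := by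
    have hIGH : Integrable (fun n : Fin d → ℝ =>
        (∑ j, a j * n j) + ∑ j, ∑ j', b j j' * (n j * n j')) μ := by
      exact hIG.add hIH
    rw [integral_congr_ae (Filter.Eventually.of_forall hpoint)]
    rw [integral_add (integrable_const _) hIGH, integral_add hIG hIH, integral_const]
    have hG : (∫ n : Fin d → ℝ, ∑ j, a j * n j ∂μ) = 0 := by
      rw [integral_finset_sum _ (fun j _ => (pi_integrable_single (ν ^ 2) j).const_mul (a j))]
      refine Finset.sum_eq_zero fun j _ => ?_
      rw [integral_const_mul, pi_integral_single, mul_zero]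
    have hH : (∫ n : Fin d → ℝ, ∑ j, ∑ j', b j j' * (n j * n j') ∂μ)
        = ∑ j, b j j * (ν:ℝ) ^ 2 := by
      rw [integral_finset_sum _ (fun j _ => integrable_finset_sum _
        (fun j' _ => (pi_integrable_pair (ν ^ 2) j j').const_mul (b j j')))]
      refine Finset.sum_congr rfl fun j _ => ?_
      rw [integral_finset_sum _ (fun j' _ => (pi_integrable_pair (ν ^ 2) j j').const_mul (b j j'))]
      have : ∀ j' : Fin d, (∫ n : Fin d → ℝ, b j j' * (n j * n j') ∂μ)
          = b j j' * (if j = j' then ((ν ^ 2 : ℝ≥0) : ℝ) else 0) := by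
        intro j'
        rw [integral_const_mul, pi_integral_pair]
      rw [Finset.sum_congr rfl fun j' _ => this j']
      simp only [mul_ite, mul_zero, Finset.sum_ite_eq, Finset.mem_univ, if_true]
      push_cast
      ring
    rw [hG, hH, probReal_univ]
    simp
  rw [hint]
  -- the key orthonormal-expansion identity
  have hkey : ∀ c : Fin d → ℝ, (∑ k, (∑ i, c i * e i k) ^ 2) = ∑ i, c i ^ 2 := by
    intro c
    have expand : ∀ k, (∑ i, c i * e i k) ^ 2 = ∑ i, ∑ i', (c i * c i') * (e i k * e i' k) := by
      intro k
      rw [sq, Finset.sum_mul_sum]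
      exact Finset.sum_congr rfl fun i _ => Finset.sum_congr rfl fun i' _ => by ring
    rw [Finset.sum_congr rfl fun k _ => expand k, Finset.sum_comm]
    refine Finset.sum_congr rfl fun i _ => ?_
    rw [Finset.sum_comm]
    have hinner : ∀ i', (∑ k, (c i * c i') * (e i k * e i' k))
        = (c i * c i') * (if i = i' then (1:ℝ) else 0) := by
      intro i'
      rw [← Finset.mul_sum, horth i i']
    rw [Finset.sum_congr rfl fun i' _ => hinner i']
    simp only [mul_ite, mul_one, mul_zero, Finset.sum_ite_eq, Finset.mem_univ, if_true]
    rw [sq]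
  -- bias term
  have hwk : ∀ k, w k = ∑ i, ((D i - 1) * (∑ l, v l * e i l)) * e i k := by
    intro k
    have hv : v k = ∑ i, (∑ l, v l * e i l) * e i k := by
      calc v k = ∑ l, v l * (if k = l then (1:ℝ) else 0) := by
            simp only [mul_ite, mul_one, mul_zero, Finset.sum_ite_eq, Finset.mem_univ, if_true]
        _ = ∑ l, v l * (∑ i, e i k * e i l) :=
            Finset.sum_congr rfl fun l _ => by rw [hE k l]
        _ = ∑ l, ∑ i, v l * (e i k * e i l) :=
            Finset.sum_congr rfl fun l _ => Finset.mul_sum _ _ _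
        _ = ∑ i, ∑ l, v l * (e i k * e i l) := Finset.sum_comm
        _ = ∑ i, (∑ l, v l * e i l) * e i k := by
            refine Finset.sum_congr rfl fun i _ => ?_
            rw [Finset.sum_mul]
            exact Finset.sum_congr rfl fun l _ => by ring
    have hCv : C.mulVec v k = ∑ i, (D i * (∑ l, v l * e i l)) * e i k := by
      calc C.mulVec v k = ∑ j, (∑ i, e i k * (D i * e i j)) * v j := by
            simp only [Matrix.mulVec, dotProduct, hC, Matrix.of_apply]
        _ = ∑ j, ∑ i, (e i k * (D i * e i j)) * v j :=
            Finset.sum_congr rfl fun j _ => Finset.sum_mul _ _ _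
        _ = ∑ i, ∑ j, (e i k * (D i * e i j)) * v j := Finset.sum_comm
        _ = ∑ i, (D i * (∑ l, v l * e i l)) * e i k := by
            refine Finset.sum_congr rfl fun i _ => ?_
            have : (D i * (∑ l, v l * e i l)) * e i k
                = ∑ l, (D i * (v l * e i l)) * e i k := by
              rw [Finset.mul_sum, Finset.sum_mul]
            rw [this]
            exact Finset.sum_congr rfl fun l _ => by ring
    show C.mulVec v k - v k = _
    rw [hCv, hv, ← Finset.sum_sub_distrib]
    exact Finset.sum_congr rfl fun i _ => by ring
  have hbias : (∑ k, w k ^ 2)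
      = ∑ i, σ ^ 2 * lam i ^ 2 / (1 + σ * lam i) ^ 2 * (∑ k, v k * e i k) ^ 2 := by
    rw [Finset.sum_congr rfl fun k (_ : k ∈ Finset.univ) => by rw [hwk k]]
    rw [hkey (fun i => (D i - 1) * (∑ l, v l * e i l))]
    refine Finset.sum_congr rfl fun i _ => ?_
    rw [mul_pow]
    congr 1
    simp only [hD]
    rw [eq_div_iff (pow_ne_zero 2 (hne i)), ← mul_pow]
    have hx : ((1 + σ * lam i)⁻¹ - 1) * (1 + σ * lam i) = -(σ * lam i) := by
      rw [sub_mul, inv_mul_cancel₀ (hne i)]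
      ring
    rw [hx]
    ring
  -- variance term
  have hvar : (∑ j, b j j * (ν:ℝ) ^ 2) = ∑ i, (ν:ℝ) ^ 2 / (1 + σ * lam i) ^ 2 := by
    have hCcol : ∀ j, b j j = ∑ i, (D i * e i j) ^ 2 := by
      intro j
      show (∑ k, C k j * C k j) = _
      have hCkj : ∀ k, C k j * C k j = (∑ i, (D i * e i j) * e i k) ^ 2 := by
        intro k
        have : C k j = ∑ i, (D i * e i j) * e i k := by
          simp only [hC, Matrix.of_apply]
          exact Finset.sum_congr rfl fun i _ => by ring
        rw [this, sq]
      rw [Finset.sum_congr rfl fun k (_ : k ∈ Finset.univ) => hCkj k,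
        hkey (fun i => D i * e i j)]
    calc (∑ j, b j j * (ν:ℝ) ^ 2)
        = ∑ j, ∑ i, (D i) ^ 2 * (ν:ℝ) ^ 2 * (e i j * e i j) := by
          refine Finset.sum_congr rfl fun j _ => ?_
          rw [hCcol j, Finset.sum_mul]
          exact Finset.sum_congr rfl fun i _ => by ring
      _ = ∑ i, ∑ j, (D i) ^ 2 * (ν:ℝ) ^ 2 * (e i j * e i j) := Finset.sum_comm
      _ = ∑ i, (D i) ^ 2 * (ν:ℝ) ^ 2 := by
          refine Finset.sum_congr rfl fun i _ => ?_
          rw [← Finset.mul_sum, horth i i, if_pos rfl, mul_one]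
      _ = ∑ i, (ν:ℝ) ^ 2 / (1 + σ * lam i) ^ 2 := by
          refine Finset.sum_congr rfl fun i _ => ?_
          simp only [hD]
          rw [inv_pow, inv_mul_eq_div]
  rw [hbias, hvar]
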